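/- For the majority function MAJ_3 on 3 bits and any p ∈ [0,1], the distributional local witness complexity satisfies ℓ(MAJ_3, π_p) = 2 + 2p(1−p). -/

import Mathlib

open Classical

noncomputable section

/-- Flip the bits of `x` in the set `B`. -/
def flipOn {ι : Type*} [DecidableEq ι] (x : ι → Bool) (B : Finset ι) : ι → Bool :=
  fun i => if i ∈ B then !(x i) else x i

/-- Pointwise sensitivity of `f` at `x`. -/
def sensAt {ι : Type*} [Fintype ι] [DecidableEq ι] (f : (ι → Bool) → Bool)
    (x : ι → Bool) : ℕ :=
  (Finset.univ.filter fun i => f (flipOn x {i}) ≠ f x).card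

/-- Pointwise block sensitivity of `f` at `x`. -/
def bsAt {ι : Type*} [DecidableEq ι] (f : (ι → Bool) → Bool) (x : ι → Bool) : ℕ :=
  sSup {m | ∃ B : Fin m → Finset ι,
    (∀ j, f (flipOn x (B j)) ≠ f x) ∧ ∀ j k, j ≠ k → Disjoint (B j) (B k)}

/-- `W` is a witness set for `f` at `x`. -/
def IsWitness {ι : Type*} (f : (ι → Bool) → Bool) (x : ι → Bool) (W : Finset ι) : Prop :=
  ∀ y, (∀ i ∈ W, y i = x i) → f y = f x

/-- Pointwise minimum witness size of `f` at `x`. -/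
def witAt {ι : Type*} (f : (ι → Bool) → Bool) (x : ι → Bool) : ℕ :=
  sInf {k | ∃ W : Finset ι, W.card = k ∧ IsWitness f x W}

/-- Decision trees querying coordinates in `ι`. -/
inductive DTree (ι : Type*) where
  | leaf : DTree ι
  | node : ι → DTree ι → DTree ι → DTree ι

/-- The set of coordinates queried by the tree `T` on input `x`. -/
def DTree.path {ι : Type*} [DecidableEq ι] : DTree ι → (ι → Bool) → Finset ι
  | .leaf, _ => ∅
  | .node i t0 t1, x => insert i (if x i then t1.path x else t0.path x)

/-- The tree `T` determines `f`: at each leaf the queried bits witness the value of `f`. -/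
def DTree.Determines {ι : Type*} [DecidableEq ι] (T : DTree ι)
    (f : (ι → Bool) → Bool) : Prop :=
  ∀ x, IsWitness f x (T.path x)

/-- A partition of the hypercube into subcubes, encoded by the map sending each point to
the code (fixed coordinates) of its part. -/
structure SubcubePartition (ι : Type*) where
  code : (ι → Bool) → (ι → Option Bool)
  self_mem : ∀ x i b, code x i = some b → x i = b
  compat : ∀ x y, (∀ i b, code x i = some b → y i = b) → code y = code x

/-- Number of coordinates fixed by the subcube containing `x`. -/
def SubcubePartition.codim {ι : Type*} [Fintype ι] (P : SubcubePartition ι)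
    (x : ι → Bool) : ℕ :=
  (Finset.univ.filter fun i => (P.code x i).isSome).card

/-- The partition determines `f`, i.e. `f` is constant on each part. -/
def SubcubePartition.Determines {ι : Type*} (P : SubcubePartition ι)
    (f : (ι → Bool) → Bool) : Prop :=
  ∀ x y, (∀ i b, P.code x i = some b → y i = b) → f y = f x

/-- Deterministic sensitivity. -/
def detSens {ι : Type*} [Fintype ι] [DecidableEq ι] (f : (ι → Bool) → Bool) : ℕ :=
  Finset.univ.sup fun x => sensAt f x

/-- Deterministic block sensitivity. -/
def detBS {ι : Type*} [Fintype ι] [DecidableEq ι] (f : (ι → Bool) → Bool) : ℕ :=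
  Finset.univ.sup fun x => bsAt f x

/-- Deterministic witness complexity. -/
def detWit {ι : Type*} [Fintype ι] [DecidableEq ι] (f : (ι → Bool) → Bool) : ℕ :=
  Finset.univ.sup fun x => witAt f x

/-- Deterministic subcube partition complexity. -/
def detSC {ι : Type*} [Fintype ι] (f : (ι → Bool) → Bool) : ℕ :=
  sInf {k | ∃ P : SubcubePartition ι, P.Determines f ∧ ∀ x, P.codim x ≤ k}

/-- Deterministic algorithmic (decision tree) complexity. -/
def detAlg {ι : Type*} [Fintype ι] [DecidableEq ι] (f : (ι → Bool) → Bool) : ℕ :=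
  sInf {k | ∃ T : DTree ι, T.Determines f ∧ ∀ x, (T.path x).card ≤ k}

/-- Weight of the configuration `x` under the product Bernoulli(p) measure `π_p`. -/
def wt {ι : Type*} [Fintype ι] (p : ℝ) (x : ι → Bool) : ℝ :=
  ∏ i, (if x i then p else 1 - p)

/-- Expectation under `π_p`. -/
def expec {ι : Type*} [Fintype ι] [DecidableEq ι] (p : ℝ) (g : (ι → Bool) → ℝ) : ℝ :=
  ∑ x, wt p x * g x

/-- Distributional sensitivity. -/
def distSens {ι : Type*} [Fintype ι] [DecidableEq ι] (f : (ι → Bool) → Bool) (p : ℝ) : ℝ :=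
  expec p fun x => (sensAt f x : ℝ)

/-- Distributional block sensitivity. -/
def distBS {ι : Type*} [Fintype ι] [DecidableEq ι] (f : (ι → Bool) → Bool) (p : ℝ) : ℝ :=
  expec p fun x => (bsAt f x : ℝ)

/-- Distributional witness complexity. -/
def distWit {ι : Type*} [Fintype ι] [DecidableEq ι] (f : (ι → Bool) → Bool) (p : ℝ) : ℝ :=
  expec p fun x => (witAt f x : ℝ)

/-- Distributional subcube partition complexity. -/
def distSC {ι : Type*} [Fintype ι] [DecidableEq ι] (f : (ι → Bool) → Bool) (p : ℝ) : ℝ :=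
  sInf {c | ∃ P : SubcubePartition ι, P.Determines f ∧
    c = expec p fun x => (P.codim x : ℝ)}

/-- Distributional algorithmic complexity. -/
def distAlg {ι : Type*} [Fintype ι] [DecidableEq ι] (f : (ι → Bool) → Bool) (p : ℝ) : ℝ :=
  sInf {c | ∃ T : DTree ι, T.Determines f ∧
    c = expec p fun x => ((T.path x).card : ℝ)}

/-- `μ x J` is the joint probability that the bits equal `x` and the random set equals `J`;
the conditions say: the marginal of the bits is `π_p`, the random set is a.s. a witness set
for `f`, and the random set is local (conditionally on `{I = J}` and the bits on `J`, the
bits outside `J` are still i.i.d. Bernoulli(p)). -/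
def IsLocalWitnessSystem {ι : Type*} [Fintype ι] [DecidableEq ι]
    (f : (ι → Bool) → Bool) (p : ℝ) (μ : (ι → Bool) → Finset ι → ℝ) : Prop :=
  (∀ x J, 0 ≤ μ x J) ∧
  (∀ x, ∑ J, μ x J = wt p x) ∧
  (∀ x J, μ x J ≠ 0 → IsWitness f x J) ∧
  (∀ (J : Finset ι) x y, (∀ i ∈ J, x i = y i) → μ x J * wt p y = μ y J * wt p x)

/-- Distributional local witness complexity. -/
def distLocal {ι : Type*} [Fintype ι] [DecidableEq ι]
    (f : (ι → Bool) → Bool) (p : ℝ) : ℝ :=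
  sInf {c | ∃ μ : (ι → Bool) → Finset ι → ℝ, IsLocalWitnessSystem f p μ ∧
    c = ∑ x, ∑ J, μ x J * (J.card : ℝ)}

/-- The majority function on 3 bits. -/
def MAJ3 : (Fin 3 → Bool) → Bool := fun x => (x 0 && x 1) || (x 0 && x 2) || (x 1 && x 2)


-- ======================= auxiliary machinery =======================

def X000 : Fin 3 → Bool := ![false,false,false]
def X100 : Fin 3 → Bool := ![true,false,false]
def X010 : Fin 3 → Bool := ![false,true,false]
def X001 : Fin 3 → Bool := ![false,false,true]
def X110 : Fin 3 → Bool := ![true,true,false]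
def X101 : Fin 3 → Bool := ![true,false,true]
def X011 : Fin 3 → Bool := ![false,true,true]
def X111 : Fin 3 → Bool := ![true,true,true]

lemma sum_J (g : Finset (Fin 3) → ℝ) :
    ∑ J : Finset (Fin 3), g J =
      g ∅ + g {0} + g {1} + g {2} + g {0,1} + g {0,2} + g {1,2} + g Finset.univ := by
  have h : (Finset.univ : Finset (Finset (Fin 3))) =
      {∅, {0}, {1}, {2}, {0,1}, {0,2}, {1,2}, Finset.univ} := by decide
  rw [h]
  rw [Finset.sum_insert (by decide), Finset.sum_insert (by decide), Finset.sum_insert (by decide),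
    Finset.sum_insert (by decide), Finset.sum_insert (by decide), Finset.sum_insert (by decide),
    Finset.sum_insert (by decide), Finset.sum_singleton]
  ring

lemma sum_X (g : (Fin 3 → Bool) → ℝ) :
    ∑ x : Fin 3 → Bool, g x =
      g X000 + g X100 + g X010 + g X001 + g X110 + g X101 + g X011 + g X111 := by
  have h : (Finset.univ : Finset (Fin 3 → Bool)) =
      {X000, X100, X010, X001, X110, X101, X011, X111} := by decide
  rw [h]
  rw [Finset.sum_insert (by decide), Finset.sum_insert (by decide), Finset.sum_insert (by decide),
    Finset.sum_insert (by decide), Finset.sum_insert (by decide), Finset.sum_insert (by decide),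
    Finset.sum_insert (by decide), Finset.sum_singleton]
  ring

lemma wt_eval (p : ℝ) (a b c : Bool) :
    wt p ![a,b,c] = (if a then p else 1-p) * (if b then p else 1-p) * (if c then p else 1-p) := by
  rw [wt, Fin.prod_univ_three]; rfl

lemma wt000 (p : ℝ) : wt p X000 = (1-p)*(1-p)*(1-p) := by simp [X000, wt_eval]
lemma wt100 (p : ℝ) : wt p X100 = p*(1-p)*(1-p) := by simp [X100, wt_eval]
lemma wt010 (p : ℝ) : wt p X010 = (1-p)*p*(1-p) := by simp [X010, wt_eval]
lemma wt001 (p : ℝ) : wt p X001 = (1-p)*(1-p)*p := by simp [X001, wt_eval]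
lemma wt110 (p : ℝ) : wt p X110 = p*p*(1-p) := by simp [X110, wt_eval]
lemma wt101 (p : ℝ) : wt p X101 = p*(1-p)*p := by simp [X101, wt_eval]
lemma wt011 (p : ℝ) : wt p X011 = (1-p)*p*p := by simp [X011, wt_eval]
lemma wt111 (p : ℝ) : wt p X111 = p*p*p := by simp [X111, wt_eval]

lemma wt_nonneg' (p : ℝ) (hp0 : 0 ≤ p) (hp1 : p ≤ 1) (x : Fin 3 → Bool) :
    0 ≤ wt p x := by
  apply Finset.prod_nonneg
  intro i _
  split <;> linarith

lemma sum_wt_one (p : ℝ) : ∑ x : Fin 3 → Bool, wt p x = 1 := by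
  rw [sum_X (fun x => wt p x)]
  rw [wt000, wt100, wt010, wt001, wt110, wt101, wt011, wt111]
  ring

lemma wit_shape : ∀ (x : Fin 3 → Bool) (J : Finset (Fin 3)),
    (∀ y, (∀ i ∈ J, y i = x i) → MAJ3 y = MAJ3 x) →
    J = Finset.univ ∨ (J = {0,1} ∧ x 0 = x 1) ∨ (J = {0,2} ∧ x 0 = x 2) ∨
      (J = {1,2} ∧ x 1 = x 2) := by decide

lemma witness_pair : ∀ x : Fin 3 → Bool, x 0 = x 1 →
    ∀ y, (∀ i ∈ ({0,1} : Finset (Fin 3)), y i = x i) → MAJ3 y = MAJ3 x := by decide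

lemma witness_univ (x : Fin 3 → Bool) : IsWitness MAJ3 x Finset.univ := by
  intro y hy
  have : y = x := funext fun i => hy i (Finset.mem_univ i)
  rw [this]

/-- The optimal local witness system for `MAJ3`. -/
def mu0 (p : ℝ) (x : Fin 3 → Bool) (J : Finset (Fin 3)) : ℝ :=
  if x 0 = x 1 then (if J = ({0,1} : Finset (Fin 3)) then wt p x else 0)
  else (if J = Finset.univ then wt p x else 0)

lemma mu0_sys (p : ℝ) (hp0 : 0 ≤ p) (hp1 : p ≤ 1) : IsLocalWitnessSystem MAJ3 p (mu0 p) := by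
  refine ⟨?_, ?_, ?_, ?_⟩
  · intro x J
    have h := wt_nonneg' p hp0 hp1 x
    unfold mu0; split_ifs <;> linarith
  · intro x
    unfold mu0; split_ifs <;> simp [Finset.sum_ite_eq']
  · intro x J hm
    unfold mu0 at hm
    split_ifs at hm with h hJ hJ
    · subst hJ; exact witness_pair x h
    · exact absurd rfl hm
    · subst hJ; exact witness_univ x
    · exact absurd rfl hm
  · intro J x y hagree
    by_cases hJu : J = Finset.univ
    · subst hJu
      have hxy : x = y := funext fun i => hagree i (Finset.mem_univ i)
      rw [hxy]
    by_cases hJp : J = ({0,1} : Finset (Fin 3))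
    · subst hJp
      have h0 : x 0 = y 0 := hagree 0 (by decide)
      have h1 : x 1 = y 1 := hagree 1 (by decide)
      unfold mu0
      by_cases hx : x 0 = x 1
      · have hy : y 0 = y 1 := by rw [← h0, ← h1]; exact hx
        rw [if_pos hx, if_pos hy, if_pos rfl, if_pos rfl]; ring
      · have hy : ¬ y 0 = y 1 := by rw [← h0, ← h1]; exact hx
        rw [if_neg hx, if_neg hy,
          if_neg (by decide : ¬ ({0,1} : Finset (Fin 3)) = Finset.univ),
          if_neg (by decide : ¬ ({0,1} : Finset (Fin 3)) = Finset.univ)]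
        ring
    · unfold mu0
      simp [hJp, hJu]

lemma mu0_cost (p : ℝ) :
    ∑ x : Fin 3 → Bool, ∑ J : Finset (Fin 3), mu0 p x J * (J.card : ℝ)
      = 2 + 2 * p * (1 - p) := by
  have hpt : ∀ x : Fin 3 → Bool, ∑ J : Finset (Fin 3), mu0 p x J * (J.card : ℝ)
      = if x 0 = x 1 then wt p x * 2 else wt p x * 3 := by
    intro x
    unfold mu0
    split_ifs with h
    · have hc : (({0,1} : Finset (Fin 3)).card : ℝ) = 2 := by
        rw [show ({0,1} : Finset (Fin 3)).card = 2 from by decide]; norm_num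
      simp only [ite_mul, zero_mul, Finset.sum_ite_eq', Finset.mem_univ, if_true, hc]
    · have hc : ((Finset.univ : Finset (Fin 3)).card : ℝ) = 3 := by
        rw [show (Finset.univ : Finset (Fin 3)).card = 3 from by decide]; norm_num
      simp only [ite_mul, zero_mul, Finset.sum_ite_eq', Finset.mem_univ, if_true, hc]
  calc ∑ x : Fin 3 → Bool, ∑ J : Finset (Fin 3), mu0 p x J * (J.card : ℝ)
      = ∑ x : Fin 3 → Bool, (if x 0 = x 1 then wt p x * 2 else wt p x * 3) :=
        Finset.sum_congr rfl fun x _ => hpt x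
    _ = 2 + 2 * p * (1 - p) := by
        rw [sum_X (fun x => if x 0 = x 1 then wt p x * 2 else wt p x * 3)]
        rw [if_pos (show X000 0 = X000 1 by decide), if_neg (show ¬ X100 0 = X100 1 by decide),
          if_neg (show ¬ X010 0 = X010 1 by decide), if_pos (show X001 0 = X001 1 by decide),
          if_pos (show X110 0 = X110 1 by decide), if_neg (show ¬ X101 0 = X101 1 by decide),
          if_neg (show ¬ X011 0 = X011 1 by decide), if_pos (show X111 0 = X111 1 by decide)]
        rw [wt000, wt100, wt010, wt001, wt110, wt101, wt011, wt111]
        ring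

set_option maxHeartbeats 2000000 in
lemma maj3_lb (p : ℝ) (hp0 : 0 ≤ p) (hp1 : p ≤ 1)
    (μ : (Fin 3 → Bool) → Finset (Fin 3) → ℝ)
    (hsys : IsLocalWitnessSystem MAJ3 p μ) :
    2 + 2 * p * (1 - p) ≤ ∑ x, ∑ J, μ x J * (J.card : ℝ) := by
  obtain ⟨h0, h1, h2, h3⟩ := hsys
  have hz : ∀ x J, ¬(J = Finset.univ ∨ (J = {0,1} ∧ x 0 = x 1) ∨ (J = {0,2} ∧ x 0 = x 2) ∨
      (J = {1,2} ∧ x 1 = x 2)) → μ x J = 0 := by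
    intro x J h
    by_contra hm
    exact h (wit_shape x J (h2 x J hm))
  -- termwise lower bound
  have htw : ∀ x J, 2 * μ x J + (if J = Finset.univ then μ x J else 0) ≤ μ x J * (J.card : ℝ) := by
    intro x J
    by_cases hm : μ x J = 0
    · simp [hm]
    have hnn := h0 x J
    rcases wit_shape x J (h2 x J hm) with h | ⟨h, -⟩ | ⟨h, -⟩ | ⟨h, -⟩ <;> subst h
    · rw [if_pos rfl]
      have hc : ((Finset.univ : Finset (Fin 3)).card : ℝ) = 3 := by
        rw [show (Finset.univ : Finset (Fin 3)).card = 3 from by decide]; norm_num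
      rw [hc]; linarith
    · rw [if_neg (by decide : ¬ ({0,1} : Finset (Fin 3)) = Finset.univ)]
      have hc : ((({0,1} : Finset (Fin 3))).card : ℝ) = 2 := by
        rw [show ({0,1} : Finset (Fin 3)).card = 2 from by decide]; norm_num
      rw [hc]; linarith
    · rw [if_neg (by decide : ¬ ({0,2} : Finset (Fin 3)) = Finset.univ)]
      have hc : ((({0,2} : Finset (Fin 3))).card : ℝ) = 2 := by
        rw [show ({0,2} : Finset (Fin 3)).card = 2 from by decide]; norm_num
      rw [hc]; linarith
    · rw [if_neg (by decide : ¬ ({1,2} : Finset (Fin 3)) = Finset.univ)]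
      have hc : ((({1,2} : Finset (Fin 3))).card : ℝ) = 2 := by
        rw [show ({1,2} : Finset (Fin 3)).card = 2 from by decide]; norm_num
      rw [hc]; linarith
  have h4 : ∀ x : Fin 3 → Bool,
      ∑ J : Finset (Fin 3), (2 * μ x J + (if J = Finset.univ then μ x J else 0))
        = 2 * wt p x + μ x Finset.univ := by
    intro x
    rw [Finset.sum_add_distrib, ← Finset.mul_sum, h1 x]
    congr 1
    simp [Finset.sum_ite_eq']
  have hTot : 2 + ∑ x : Fin 3 → Bool, μ x Finset.univ ≤ ∑ x, ∑ J, μ x J * (J.card : ℝ) := by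
    have hle : ∑ x : Fin 3 → Bool, (2 * wt p x + μ x Finset.univ)
        ≤ ∑ x, ∑ J, μ x J * (J.card : ℝ) := by
      apply Finset.sum_le_sum
      intro x _
      rw [← h4 x]
      exact Finset.sum_le_sum fun J _ => htw x J
    have he : ∑ x : Fin 3 → Bool, (2 * wt p x + μ x Finset.univ)
        = 2 + ∑ x : Fin 3 → Bool, μ x Finset.univ := by
      rw [Finset.sum_add_distrib, ← Finset.mul_sum, sum_wt_one]
      ring
    linarith [he ▸ hle]
  have hUnn : (0:ℝ) ≤ ∑ x : Fin 3 → Bool, μ x Finset.univ :=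
    Finset.sum_nonneg fun x _ => h0 x _
  -- main claim: the mass on the full set is at least 2p(1-p)
  have hU : 2 * p * (1 - p) ≤ ∑ x : Fin 3 → Bool, μ x Finset.univ := by
    rcases eq_or_lt_of_le hp0 with hp | hp
    · rw [← hp]; simpa using hUnn
    rcases eq_or_lt_of_le hp1 with hq | hq
    · rw [hq]; simpa using hUnn
    -- 0 < p < 1
    have hq' : (0:ℝ) < 1 - p := by linarith
    -- marginal equations
    have e111 := h1 X111
    rw [sum_J (fun J => μ X111 J), hz X111 ∅ (by decide), hz X111 {0} (by decide),
      hz X111 {1} (by decide), hz X111 {2} (by decide), wt111] at e111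
    have e110 := h1 X110
    rw [sum_J (fun J => μ X110 J), hz X110 ∅ (by decide), hz X110 {0} (by decide),
      hz X110 {1} (by decide), hz X110 {2} (by decide), hz X110 {0,2} (by decide),
      hz X110 {1,2} (by decide), wt110] at e110
    have e101 := h1 X101
    rw [sum_J (fun J => μ X101 J), hz X101 ∅ (by decide), hz X101 {0} (by decide),
      hz X101 {1} (by decide), hz X101 {2} (by decide), hz X101 {0,1} (by decide),
      hz X101 {1,2} (by decide), wt101] at e101
    have e011 := h1 X011
    rw [sum_J (fun J => μ X011 J), hz X011 ∅ (by decide), hz X011 {0} (by decide),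
      hz X011 {1} (by decide), hz X011 {2} (by decide), hz X011 {0,1} (by decide),
      hz X011 {0,2} (by decide), wt011] at e011
    have e000 := h1 X000
    rw [sum_J (fun J => μ X000 J), hz X000 ∅ (by decide), hz X000 {0} (by decide),
      hz X000 {1} (by decide), hz X000 {2} (by decide), wt000] at e000
    have e001 := h1 X001
    rw [sum_J (fun J => μ X001 J), hz X001 ∅ (by decide), hz X001 {0} (by decide),
      hz X001 {1} (by decide), hz X001 {2} (by decide), hz X001 {0,2} (by decide),
      hz X001 {1,2} (by decide), wt001] at e001
    have e010 := h1 X010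
    rw [sum_J (fun J => μ X010 J), hz X010 ∅ (by decide), hz X010 {0} (by decide),
      hz X010 {1} (by decide), hz X010 {2} (by decide), hz X010 {0,1} (by decide),
      hz X010 {1,2} (by decide), wt010] at e010
    have e100 := h1 X100
    rw [sum_J (fun J => μ X100 J), hz X100 ∅ (by decide), hz X100 {0} (by decide),
      hz X100 {1} (by decide), hz X100 {2} (by decide), hz X100 {0,1} (by decide),
      hz X100 {0,2} (by decide), wt100] at e100
    -- locality equations
    have l110 := h3 {0,1} X110 X111 (by decide)
    rw [wt111, wt110] at l110
    have l110' : p * μ X110 {0,1} = (1-p) * μ X111 {0,1} :=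
      mul_left_cancel₀ (show (p*p : ℝ) ≠ 0 by positivity) (by linear_combination l110)
    have l101 := h3 {0,2} X101 X111 (by decide)
    rw [wt111, wt101] at l101
    have l101' : p * μ X101 {0,2} = (1-p) * μ X111 {0,2} :=
      mul_left_cancel₀ (show (p*p : ℝ) ≠ 0 by positivity) (by linear_combination l101)
    have l011 := h3 {1,2} X011 X111 (by decide)
    rw [wt111, wt011] at l011
    have l011' : p * μ X011 {1,2} = (1-p) * μ X111 {1,2} :=
      mul_left_cancel₀ (show (p*p : ℝ) ≠ 0 by positivity) (by linear_combination l011)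
    have l001 := h3 {0,1} X001 X000 (by decide)
    rw [wt000, wt001] at l001
    have l001' : (1-p) * μ X001 {0,1} = p * μ X000 {0,1} :=
      mul_left_cancel₀ (show ((1-p)*(1-p) : ℝ) ≠ 0 by positivity) (by linear_combination l001)
    have l010 := h3 {0,2} X010 X000 (by decide)
    rw [wt000, wt010] at l010
    have l010' : (1-p) * μ X010 {0,2} = p * μ X000 {0,2} :=
      mul_left_cancel₀ (show ((1-p)*(1-p) : ℝ) ≠ 0 by positivity) (by linear_combination l010)
    have l100 := h3 {1,2} X100 X000 (by decide)
    rw [wt000, wt100] at l100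
    have l100' : (1-p) * μ X100 {1,2} = p * μ X000 {1,2} :=
      mul_left_cancel₀ (show ((1-p)*(1-p) : ℝ) ≠ 0 by positivity) (by linear_combination l100)
    -- claim for the 1-side
    have key1 : p * (μ X111 Finset.univ + μ X110 Finset.univ + μ X101 Finset.univ +
        μ X011 Finset.univ) = μ X111 Finset.univ + 2*p^3*(1-p) := by
      linear_combination p*e110 + p*e101 + p*e011 - l110' - l101' - l011' - (1-p)*e111
    have A : 2*p^2*(1-p) ≤ μ X111 Finset.univ + μ X110 Finset.univ + μ X101 Finset.univ +
        μ X011 Finset.univ := by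
      have hU1 := h0 X111 Finset.univ
      have h5 : p * (2*p^2*(1-p)) ≤ p * (μ X111 Finset.univ + μ X110 Finset.univ +
          μ X101 Finset.univ + μ X011 Finset.univ) := by nlinarith [key1, hU1]
      exact le_of_mul_le_mul_left h5 hp
    -- claim for the 0-side
    have key0 : (1-p) * (μ X000 Finset.univ + μ X001 Finset.univ + μ X010 Finset.univ +
        μ X100 Finset.univ) = μ X000 Finset.univ + 2*(1-p)^3*p := by
      linear_combination (1-p)*e001 + (1-p)*e010 + (1-p)*e100 - l001' - l010' - l100' - p*e000
    have B : 2*p*(1-p)^2 ≤ μ X000 Finset.univ + μ X001 Finset.univ + μ X010 Finset.univ +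
        μ X100 Finset.univ := by
      have hU0 := h0 X000 Finset.univ
      have h5 : (1-p) * (2*p*(1-p)^2) ≤ (1-p) * (μ X000 Finset.univ + μ X001 Finset.univ +
          μ X010 Finset.univ + μ X100 Finset.univ) := by nlinarith [key0, hU0]
      exact le_of_mul_le_mul_left h5 hq'
    rw [sum_X (fun x => μ x Finset.univ)]
    have hiden : 2*p^2*(1-p) + 2*p*(1-p)^2 = 2*p*(1-p) := by ring
    linarith [A, B]
  linarith [hTot, hU]


/-- the distributional local witness complexity of `MAJ_3` is `2 + 2p(1-p)`. -/
theorem maj3_distLocal (p : ℝ) (hp0 : 0 ≤ p) (hp1 : p ≤ 1) :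
    distLocal MAJ3 p = 2 + 2 * p * (1 - p) := by
  have hmem : (2 + 2 * p * (1 - p)) ∈ {c | ∃ μ : (Fin 3 → Bool) → Finset (Fin 3) → ℝ,
      IsLocalWitnessSystem MAJ3 p μ ∧ c = ∑ x, ∑ J, μ x J * (J.card : ℝ)} :=
    ⟨mu0 p, mu0_sys p hp0 hp1, (mu0_cost p).symm⟩
  have hlb : ∀ c ∈ {c | ∃ μ : (Fin 3 → Bool) → Finset (Fin 3) → ℝ,
      IsLocalWitnessSystem MAJ3 p μ ∧ c = ∑ x, ∑ J, μ x J * (J.card : ℝ)},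
      2 + 2 * p * (1 - p) ≤ c := by
    rintro c ⟨μ, hsys, rfl⟩
    exact maj3_lb p hp0 hp1 μ hsys
  exact le_antisymm (csInf_le ⟨_, hlb⟩ hmem) (le_csInf ⟨_, hmem⟩ hlb)
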